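/- Let (α₁, α₂, β₁, β₂) be a linear contact pair of type (h,k) on a real vector space V of dimension 2h+2k+2 with Reeb vectors Z₁, Z₂, let φ : V → V be a linear map with φ² = −Id + α₁ ⊗ Z₁ + α₂ ⊗ Z₂ and φ(Z₁) = φ(Z₂) = 0, and let g be an inner product on V satisfying the compatibility condition g(φX, φY) = g(X, Y) − α₁(X)α₁(Y) − α₂(X)α₂(Y) for all X, Y ∈ V. Then V admits a g-orthonormal basis of the form {Z₁, Z₂, X₁, φX₁, …, X_{h+k}, φX_{h+k}} (a φ-basis). -/

import Mathlib

open scoped TensorProduct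

/-- The wedge product of two real-valued alternating forms (determinant/shuffle convention). -/
noncomputable def wedge {V : Type*} [AddCommGroup V] [Module ℝ V] {a b : ℕ}
    (ω : V [⋀^Fin a]→ₗ[ℝ] ℝ) (η : V [⋀^Fin b]→ₗ[ℝ] ℝ) :
    V [⋀^Fin (a + b)]→ₗ[ℝ] ℝ :=
  AlternatingMap.domDomCongr finSumFinEquiv
    ((TensorProduct.lid ℝ ℝ).toLinearMap.compAlternatingMap (ω.domCoprod η))

/-- A linear functional regarded as an alternating 1-form. -/
noncomputable def oneForm {V : Type*} [AddCommGroup V] [Module ℝ V]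
    (α : V →ₗ[ℝ] ℝ) : V [⋀^Fin 1]→ₗ[ℝ] ℝ :=
  AlternatingMap.ofSubsingleton ℝ V ℝ (0 : Fin 1) α

/-- Wedge powers of an alternating 2-form. -/
noncomputable def wpow {V : Type*} [AddCommGroup V] [Module ℝ V]
    (β : V [⋀^Fin 2]→ₗ[ℝ] ℝ) : (n : ℕ) → V [⋀^Fin (2 * n)]→ₗ[ℝ] ℝ
  | 0 => AlternatingMap.domDomCongr (finCongr (by omega))
      (AlternatingMap.constOfIsEmpty ℝ V (Fin 0) 1)
  | n + 1 => AlternatingMap.domDomCongr (finCongr (by omega : 2 + 2 * n = 2 * (n + 1)))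
      (wedge β (wpow β n))

/-- The top-degree form `α₁ ∧ β₁^h ∧ α₂ ∧ β₂^k`. -/
noncomputable def cpForm {V : Type*} [AddCommGroup V] [Module ℝ V] (h k : ℕ)
    (α₁ α₂ : V →ₗ[ℝ] ℝ) (β₁ β₂ : V [⋀^Fin 2]→ₗ[ℝ] ℝ) :
    V [⋀^Fin (1 + (2 * h + (1 + 2 * k)))]→ₗ[ℝ] ℝ :=
  wedge (oneForm α₁) (wedge (wpow β₁ h) (wedge (oneForm α₂) (wpow β₂ k)))

/-- A linear contact pair of type `(h, k)`:
`α₁ ∧ β₁^h ∧ α₂ ∧ β₂^k ≠ 0`, `β₁^(h+1) = 0` and `β₂^(k+1) = 0`. -/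
structure IsLinearContactPair {V : Type*} [AddCommGroup V] [Module ℝ V] (h k : ℕ)
    (α₁ α₂ : V →ₗ[ℝ] ℝ) (β₁ β₂ : V [⋀^Fin 2]→ₗ[ℝ] ℝ) : Prop where
  top_ne_zero : cpForm h k α₁ α₂ β₁ β₂ ≠ 0
  pow_fst : wpow β₁ (h + 1) = 0
  pow_snd : wpow β₂ (k + 1) = 0

/-- The Reeb conditions for a pair of vectors `(Z₁, Z₂)`:
`α₁(Z₁) = α₂(Z₂) = 1`, `α₁(Z₂) = α₂(Z₁) = 0` and `β₁(Zᵢ, ·) = β₂(Zᵢ, ·) = 0`. -/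
def IsReebPair {V : Type*} [AddCommGroup V] [Module ℝ V]
    (α₁ α₂ : V →ₗ[ℝ] ℝ) (β₁ β₂ : V [⋀^Fin 2]→ₗ[ℝ] ℝ) (Z₁ Z₂ : V) : Prop :=
  α₁ Z₁ = 1 ∧ α₂ Z₂ = 1 ∧ α₁ Z₂ = 0 ∧ α₂ Z₁ = 0 ∧
    β₁.curryLeft Z₁ = 0 ∧ β₂.curryLeft Z₁ = 0 ∧ β₁.curryLeft Z₂ = 0 ∧ β₂.curryLeft Z₂ = 0

/-- An inner product (symmetric positive-definite bilinear form). -/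
def IsInnerProduct {V : Type*} [AddCommGroup V] [Module ℝ V]
    (g : V →ₗ[ℝ] V →ₗ[ℝ] ℝ) : Prop :=
  (∀ x y, g x y = g y x) ∧ ∀ x, x ≠ 0 → 0 < g x x

lemma phi_key {W : Type*} [AddCommGroup W] [Module ℝ W] [FiniteDimensional ℝ W]
    (G : W →ₗ[ℝ] W →ₗ[ℝ] ℝ) (hsym : ∀ x y, G x y = G y x)
    (hpos : ∀ x, x ≠ 0 → 0 < G x x) (J : W →ₗ[ℝ] W) :
    ∀ (m : ℕ) (S : Submodule ℝ W), (∀ x ∈ S, J x ∈ S) → (∀ x ∈ S, J (J x) = -x) →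
    (∀ x ∈ S, ∀ y ∈ S, G (J x) (J y) = G x y) → Module.finrank ℝ S = 2 * m →
    ∃ X : Fin m → W, (∀ i, X i ∈ S) ∧
      (∀ i j, G (X i) (X j) = if i = j then 1 else 0) ∧
      (∀ i j, G (X i) (J (X j)) = 0) := by
  intro m
  induction m with
  | zero =>
    intro S _ _ _ _
    exact ⟨fun i => i.elim0, fun i => i.elim0, fun i => i.elim0, fun i => i.elim0⟩
  | succ m ih =>
    intro S hJS hJ2 hJG hrk
    have hS : S ≠ ⊥ := by
      intro hbot
      rw [hbot, finrank_bot] at hrk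
      omega
    obtain ⟨x, hxS, hx0⟩ := Submodule.exists_mem_ne_zero_of_ne_bot hS
    have hxx : 0 < G x x := hpos x hx0
    set c : ℝ := (Real.sqrt (G x x))⁻¹ with hc
    set X₀ : W := c • x with hX0
    have hX0S : X₀ ∈ S := S.smul_mem c hxS
    have hJX0S : J X₀ ∈ S := hJS _ hX0S
    have hX0X0 : G X₀ X₀ = 1 := by
      have hs : Real.sqrt (G x x) * Real.sqrt (G x x) = G x x := Real.mul_self_sqrt hxx.le
      have hsp : (0:ℝ) < Real.sqrt (G x x) := Real.sqrt_pos.mpr hxx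
      simp only [hX0, map_smul, LinearMap.smul_apply, smul_eq_mul, hc]
      field_simp
      rw [Real.sq_sqrt hxx.le]
    have anti : ∀ a ∈ S, ∀ b ∈ S, G (J a) b = -(G a (J b)) := by
      intro a ha b hb
      have h1 := hJG a ha (J b) (hJS b hb)
      rw [hJ2 b hb, map_neg] at h1
      linarith
    have hX0J : G X₀ (J X₀) = 0 := by
      have h1 := anti X₀ hX0S X₀ hX0S
      have h2 := hsym (J X₀) X₀
      linarith
    have hJX0X0 : G (J X₀) X₀ = 0 := by rw [hsym]; exact hX0J
    have hJJ1 : G (J X₀) (J X₀) = 1 := by rw [hJG X₀ hX0S X₀ hX0S]; exact hX0X0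
    set A : W →ₗ[ℝ] ℝ × ℝ := LinearMap.prod (G X₀) (G (J X₀)) with hA
    set S' : Submodule ℝ W := S ⊓ LinearMap.ker A with hS'
    have memS' : ∀ y, y ∈ S' ↔ y ∈ S ∧ G X₀ y = 0 ∧ G (J X₀) y = 0 := by
      intro y
      simp [hS', hA, Submodule.mem_inf, LinearMap.mem_ker, LinearMap.prod_apply, Prod.ext_iff]
    have hS'J : ∀ y ∈ S', J y ∈ S' := by
      intro y hy
      obtain ⟨hyS, hy1, hy2⟩ := (memS' y).mp hy
      refine (memS' (J y)).mpr ⟨hJS y hyS, ?_, ?_⟩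
      · rw [hsym, anti y hyS X₀ hX0S, hsym]
        simpa using hy2
      · rw [hJG X₀ hX0S y hyS]; exact hy1
    -- finrank of S'
    set B : S →ₗ[ℝ] ℝ × ℝ := A.comp S.subtype with hB
    have hBsurj : Function.Surjective B := by
      intro p
      refine ⟨⟨p.1 • X₀ + p.2 • J X₀, S.add_mem (S.smul_mem _ hX0S) (S.smul_mem _ hJX0S)⟩, ?_⟩
      simp [hB, hA, LinearMap.prod_apply, hX0X0, hX0J, hJX0X0, hJJ1, Prod.ext_iff]
    have hrkker : Module.finrank ℝ (LinearMap.ker B) = 2 * m := by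
      have h1 := LinearMap.finrank_range_add_finrank_ker B
      rw [LinearMap.range_eq_top.mpr hBsurj, hrk] at h1
      have h2 : Module.finrank ℝ (⊤ : Submodule ℝ (ℝ × ℝ)) = 2 := by
        rw [finrank_top]; simp
      omega
    have hrkS' : Module.finrank ℝ S' = 2 * m := by
      have he : (LinearMap.ker B : Submodule ℝ S) ≃ₗ[ℝ]
          (Submodule.map S.subtype (LinearMap.ker B)) := S.equivSubtypeMap _
      have hmap : Submodule.map S.subtype (LinearMap.ker B) = S' := by
        rw [hB, LinearMap.ker_comp, Submodule.map_comap_subtype]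
      rw [← hrkker, ← hmap]
      exact (he.finrank_eq).symm
    obtain ⟨X', hX'S, hX'g, hX'J⟩ := ih S' hS'J
      (fun y hy => hJ2 y (((memS' y).mp hy).1))
      (fun a ha b hb => hJG a (((memS' a).mp ha).1) b (((memS' b).mp hb).1)) hrkS'
    have hk1 : ∀ i, G X₀ (X' i) = 0 := fun i => ((memS' _).mp (hX'S i)).2.1
    have hk2 : ∀ i, G (J X₀) (X' i) = 0 := fun i => ((memS' _).mp (hX'S i)).2.2
    have hk1J : ∀ i, G X₀ (J (X' i)) = 0 := fun i => ((memS' _).mp (hS'J _ (hX'S i))).2.1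
    refine ⟨Fin.cons X₀ X', ?_, ?_, ?_⟩
    · intro i
      refine Fin.cases ?_ ?_ i
      · simpa using hX0S
      · intro j; simpa using ((memS' _).mp (hX'S j)).1
    · intro i j
      refine Fin.cases ?_ ?_ i <;> [skip; intro i'] <;> refine Fin.cases ?_ ?_ j <;> try intro j'
      · simp [hX0X0]
      · simp [hk1, (Fin.succ_ne_zero _).symm]
      · simp only [Fin.cons_succ, Fin.cons_zero, Fin.succ_ne_zero, if_false]
        rw [hsym]; exact hk1 i'
      · have := hX'g i' j'
        simp only [Fin.cons_succ]
        rw [this]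
        simp [Fin.succ_inj]
    · intro i j
      refine Fin.cases ?_ ?_ i <;> [skip; intro i'] <;> refine Fin.cases ?_ ?_ j <;> try intro j'
      · simpa using hX0J
      · simpa using hk1J j'
      · simp only [Fin.cons_succ, Fin.cons_zero]
        rw [hsym]; exact hk2 i'
      · simpa using hX'J i' j'

/-- Existence of a `φ`-basis: a `g`-orthonormal basis of the form
`{Z₁, Z₂, X₁, φX₁, …, X_{h+k}, φX_{h+k}}` for any compatible inner product `g`. -/
theorem exists_phi_basis {V : Type*} [AddCommGroup V] [Module ℝ V]
    [FiniteDimensional ℝ V] (h k : ℕ) (hdim : Module.finrank ℝ V = 2 * h + 2 * k + 2)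
    (α₁ α₂ : V →ₗ[ℝ] ℝ) (β₁ β₂ : V [⋀^Fin 2]→ₗ[ℝ] ℝ)
    (hcp : IsLinearContactPair h k α₁ α₂ β₁ β₂)
    (Z₁ Z₂ : V) (hZ : IsReebPair α₁ α₂ β₁ β₂ Z₁ Z₂)
    (φ : V →ₗ[ℝ] V)
    (hφsq : ∀ X : V, φ (φ X) = -X + α₁ X • Z₁ + α₂ X • Z₂)
    (hφZ₁ : φ Z₁ = 0) (hφZ₂ : φ Z₂ = 0)
    (g : V →ₗ[ℝ] V →ₗ[ℝ] ℝ) (hg : IsInnerProduct g)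
    (hcompat : ∀ X Y : V, g (φ X) (φ Y) = g X Y - α₁ X * α₁ Y - α₂ X * α₂ Y) :
    ∃ (X : Fin (h + k) → V) (b : Module.Basis (Fin 2 ⊕ Fin (h + k) × Fin 2) ℝ V),
      b (Sum.inl 0) = Z₁ ∧ b (Sum.inl 1) = Z₂ ∧
      (∀ i, b (Sum.inr (i, 0)) = X i) ∧ (∀ i, b (Sum.inr (i, 1)) = φ (X i)) ∧
      ∀ i j, g (b i) (b j) = if i = j then 1 else 0 := by
  obtain ⟨hgsym, hgpos⟩ := hg
  obtain ⟨h11, h22, h12, h21, -, -, -, -⟩ := hZ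
  clear hcp
  -- `g x Z₁ = α₁ x` and `g x Z₂ = α₂ x`
  have gZ1 : ∀ x, g x Z₁ = α₁ x := by
    intro x
    have hc := hcompat x Z₁
    rw [hφZ₁, map_zero, h11, h21] at hc
    linarith
  have gZ2 : ∀ x, g x Z₂ = α₂ x := by
    intro x
    have hc := hcompat x Z₂
    rw [hφZ₂, map_zero, h22, h12] at hc
    linarith
  -- `α₁ ∘ φ = 0` and `α₂ ∘ φ = 0`
  have hφ3 : ∀ x, φ (φ (φ x)) = -φ x := by
    intro x
    rw [hφsq x]
    simp [map_add, map_smul, map_neg, hφZ₁, hφZ₂]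
  have hα1φ : ∀ x, α₁ (φ x) = 0 := by
    intro x
    have e1 := congrArg α₁ (hφsq (φ x))
    rw [hφ3 x] at e1
    simp only [map_add, map_smul, map_neg, smul_eq_mul, h11, h12] at e1
    linarith
  have hα2φ : ∀ x, α₂ (φ x) = 0 := by
    intro x
    have e1 := congrArg α₂ (hφsq (φ x))
    rw [hφ3 x] at e1
    simp only [map_add, map_smul, map_neg, smul_eq_mul, h21, h22] at e1
    linarith
  -- the horizontal subspace
  set D : Submodule ℝ V := LinearMap.ker α₁ ⊓ LinearMap.ker α₂ with hD
  have memD : ∀ x, x ∈ D ↔ α₁ x = 0 ∧ α₂ x = 0 := by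
    intro x; simp [hD, Submodule.mem_inf, LinearMap.mem_ker]
  have hDrk : Module.finrank ℝ D = 2 * (h + k) := by
    set A : V →ₗ[ℝ] ℝ × ℝ := α₁.prod α₂ with hA
    have hker : LinearMap.ker A = D := by rw [hA, LinearMap.ker_prod]
    have hsurj : Function.Surjective A := by
      intro p
      refine ⟨p.1 • Z₁ + p.2 • Z₂, ?_⟩
      simp [hA, LinearMap.prod_apply, h11, h12, h21, h22, Prod.ext_iff]
    have h1 := LinearMap.finrank_range_add_finrank_ker A
    rw [LinearMap.range_eq_top.mpr hsurj, hker, hdim] at h1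
    have h2 : Module.finrank ℝ (⊤ : Submodule ℝ (ℝ × ℝ)) = 2 := by rw [finrank_top]; simp
    omega
  obtain ⟨X, hXD, hXg, hXJ⟩ := phi_key g hgsym hgpos φ (h + k) D
    (fun x hx => (memD _).mpr ⟨hα1φ x, hα2φ x⟩)
    (fun x hx => by
      obtain ⟨h1, h2⟩ := (memD x).mp hx
      rw [hφsq x, h1, h2]; simp)
    (fun x hx y hy => by
      obtain ⟨h1, h2⟩ := (memD x).mp hx
      rw [hcompat x y, h1, h2]; ring) hDrk
  have hX1 : ∀ i, α₁ (X i) = 0 := fun i => ((memD _).mp (hXD i)).1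
  have hX2 : ∀ i, α₂ (X i) = 0 := fun i => ((memD _).mp (hXD i)).2
  -- the candidate family
  set v : Fin 2 ⊕ Fin (h + k) × Fin 2 → V :=
    Sum.elim ![Z₁, Z₂] (fun p => ![X p.1, φ (X p.1)] p.2) with hv
  have Gram : ∀ i j, g (v i) (v j) = if i = j then 1 else 0 := by
    have gZZ11 : g Z₁ Z₁ = 1 := by rw [gZ1, h11]
    have gZZ12 : g Z₁ Z₂ = 0 := by rw [gZ2, h21]
    have gZZ21 : g Z₂ Z₁ = 0 := by rw [gZ1, h12]
    have gZZ22 : g Z₂ Z₂ = 1 := by rw [gZ2, h22]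
    have gφφ : ∀ i j, g (φ (X i)) (φ (X j)) = if i = j then 1 else 0 := by
      intro i j; rw [hcompat, hX1, hX2, hXg]; ring
    have gφX : ∀ i j, g (φ (X i)) (X j) = 0 := by
      intro i j; rw [hgsym]; exact hXJ j i
    rintro (i | ⟨i, ci⟩) (j | ⟨j, cj⟩)
    · fin_cases i <;> fin_cases j <;>
        simp [hv, gZZ11, gZZ12, gZZ21, gZZ22]
    · fin_cases i <;> fin_cases cj <;>
        simp [hv, gZ1, gZ2, hgsym Z₁, hgsym Z₂, hX1, hX2, hα1φ, hα2φ]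
    · fin_cases j <;> fin_cases ci <;>
        simp [hv, gZ1, gZ2, hX1, hX2, hα1φ, hα2φ]
    · fin_cases ci <;> fin_cases cj <;>
        simp [hv, hXg, hXJ, gφX, gφφ, Prod.ext_iff]
  have li : LinearIndependent ℝ v := by
    rw [linearIndependent_iff']
    intro s f hsum i hi
    have hval := congrArg (fun w => g (v i) w) hsum
    simp only [map_sum, map_smul, smul_eq_mul, map_zero] at hval
    rw [Finset.sum_eq_single i (fun j _ hne => by
        rw [Gram i j, if_neg (fun hh => hne hh.symm), mul_zero])
      (fun hnot => absurd hi hnot)] at hval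
    rw [Gram i i, if_pos rfl, mul_one] at hval
    exact hval
  have hcard : Fintype.card (Fin 2 ⊕ Fin (h + k) × Fin 2) = Module.finrank ℝ V := by
    simp [Fintype.card_sum, Fintype.card_prod, hdim]
    omega
  set b := basisOfLinearIndependentOfCardEqFinrank li hcard with hb
  have hbv : ⇑b = v := coe_basisOfLinearIndependentOfCardEqFinrank li hcard
  refine ⟨X, b, ?_, ?_, ?_, ?_, ?_⟩
  · rw [hbv]; simp [hv]
  · rw [hbv]; simp [hv]
  · intro i; rw [hbv]; simp [hv]
  · intro i; rw [hbv]; simp [hv]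
  · intro i j; rw [hbv]; exact Gram i j
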